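/- arXiv:math/0605203 — 3 statements merged into one kernel-verified Lean document; each statement's English description precedes it below -/
import Mathlib

section
/- Let i < j-1 be integers and A a subset of the open integer interval (i..j) with j-1 ∉ A. Then the polynomial K_{i,j}(A) in Z[x_i,...,x_{j-1},y_{i+1},...,y_j], defined by K_{i,j}(A) = Σ_{B ⊆ (i..j)} H_{i,j}(A,B) · Π_{t ∈ B∪{i}} (y_{t+1} - x_t), equals K_{i,j-1}(A) (viewed in the smaller polynomial ring). -/
open Finset

noncomputable section

/-- The polynomial ring `ℤ[xₜ, y_q : t, q ∈ ℤ]`. -/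
abbrev MyR : Type := MvPolynomial (ℤ ⊕ ℤ) ℤ

/-- Its field of fractions. -/
abbrev MyFF : Type := FractionRing MyR

/-- The variable `x_t`. -/
def Xv (t : ℤ) : MyFF := algebraMap MyR MyFF (MvPolynomial.X (Sum.inl t))

/-- The variable `y_q`. -/
def Yv (q : ℤ) : MyFF := algebraMap MyR MyFF (MvPolynomial.X (Sum.inr q))

/-- `D_i(t) = max {s ∈ D ∪ {i} : s < t}`. -/
def Di (i : ℤ) (D : Finset ℤ) (t : ℤ) : ℤ :=
  (((insert i D).filter (fun s => s < t)).max).unbotD i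

/-- `H_{i,j}(A,B)` viewed in the fraction field. -/
def Hfr (i : ℤ) (A B : Finset ℤ) : MyFF :=
  ∑ D ∈ (B \ A).powerset, (-1 : MyFF) ^ D.card *
    (∏ t ∈ A, (Xv t - Xv (Di i D t))) / ∏ t ∈ B, (Xv t - Xv (Di i D t))

/-- `K_{i,j}(A) = Σ_{B ⊆ (i..j)} H_{i,j}(A,B) Π_{t ∈ B ∪ {i}} (y_{t+1} - x_t)`. -/
def Kfr (i j : ℤ) (A : Finset ℤ) : MyFF :=
  ∑ B ∈ (Finset.Ioo i j).powerset, Hfr i A B * ∏ t ∈ insert i B, (Yv (t + 1) - Xv t)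

/-- Inserting an element `m ≥ t` into `D` does not change `D_i(t)`. -/
lemma Di_insert_of_le (i m : ℤ) (D : Finset ℤ) (t : ℤ) (h : t ≤ m) :
    Di i (insert m D) t = Di i D t := by
  unfold Di
  rw [Finset.insert_comm, Finset.filter_insert, if_neg (by omega)]

/-- If `m` is an element of `B` not in `A`, and bounds `A` and `B` above, then
`H_{i,j}(A,B) = 0`. -/
lemma Hfr_zero (i m : ℤ) (A B : Finset ℤ) (hmB : m ∈ B) (hmA : m ∉ A)
    (hAle : ∀ t ∈ A, t ≤ m) (hBle : ∀ t ∈ B, t ≤ m) : Hfr i A B = 0 := by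
  unfold Hfr
  rw [show B \ A = insert m ((B \ A).erase m) from
        (Finset.insert_erase (Finset.mem_sdiff.mpr ⟨hmB, hmA⟩)).symm,
      Finset.sum_powerset_insert (Finset.notMem_erase m _), ← Finset.sum_add_distrib]
  apply Finset.sum_eq_zero
  intro D hD
  have hmD : m ∉ D := fun h => Finset.notMem_erase m _ (Finset.mem_powerset.mp hD h)
  have hP : ∏ t ∈ A, (Xv t - Xv (Di i (insert m D) t)) = ∏ t ∈ A, (Xv t - Xv (Di i D t)) :=
    Finset.prod_congr rfl fun t ht => by rw [Di_insert_of_le _ _ _ _ (hAle t ht)]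
  have hQ : ∏ t ∈ B, (Xv t - Xv (Di i (insert m D) t)) = ∏ t ∈ B, (Xv t - Xv (Di i D t)) :=
    Finset.prod_congr rfl fun t ht => by rw [Di_insert_of_le _ _ _ _ (hBle t ht)]
  rw [hP, hQ, Finset.card_insert_of_notMem hmD, pow_succ]
  ring

/-- Lemma 4(i): if `j-1 ∉ A` then `K_{i,j}(A) = K_{i,j-1}(A)`. -/
theorem stmt0 (i j : ℤ) (A : Finset ℤ) (hij : i < j - 1)
    (hA : A ⊆ Finset.Ioo i j) (hj : j - 1 ∉ A) :
    Kfr i j A = Kfr i (j - 1) A := by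
  have hins : Finset.Ioo i j = insert (j - 1) (Finset.Ioo i (j - 1)) := by
    ext t; simp only [Finset.mem_Ioo, Finset.mem_insert]; omega
  unfold Kfr
  rw [hins, Finset.sum_powerset_insert (by simp)]
  have h2 : ∑ B ∈ (Finset.Ioo i (j - 1)).powerset,
      Hfr i A (insert (j - 1) B) * ∏ t ∈ insert i (insert (j - 1) B), (Yv (t + 1) - Xv t)
      = 0 := by
    apply Finset.sum_eq_zero
    intro B hB
    have hBsub := Finset.mem_powerset.mp hB
    have hz : Hfr i A (insert (j - 1) B) = 0 := by
      apply Hfr_zero i (j - 1) A _ (Finset.mem_insert_self _ _) hj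
      · intro t ht
        have := hA ht
        rw [Finset.mem_Ioo] at this
        have : t ≠ j - 1 := fun h => hj (h ▸ ht)
        omega
      · intro t ht
        rcases Finset.mem_insert.mp ht with h | h
        · omega
        · have := hBsub h
          rw [Finset.mem_Ioo] at this
          omega
    rw [hz, zero_mul]
  rw [h2, add_zero]

end
end

section
/- Let i < j-1 be integers and A a subset of (i..j) with j-1 ∈ A, and set k := max([i..j) \ A) (the maximum of the half-open interval [i..j) with A removed; note i ∈ [i..j)\A so k is well defined). Then K_{i,j}(A) = K_{i,j-1}(A \ {j-1}) · (y_j - x_k) + δ_{k ≠ i} · K_{i,j-1}({k} ∪ A \ {j-1}), where δ_{k≠i} is 1 if k ≠ i and 0 otherwise. -/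
open Finset

noncomputable section

lemma Xv_sub_ne_zero {s t : ℤ} (h : s ≠ t) : Xv s - Xv t ≠ 0 := by
  unfold Xv
  rw [← map_sub, Ne, map_eq_zero_iff _ (IsFractionRing.injective MyR MyFF), sub_eq_zero]
  intro hc
  exact h (Sum.inl.inj (MvPolynomial.X_injective hc))

lemma Di_lt (i : ℤ) (D : Finset ℤ) (t : ℤ) (h : i < t) : Di i D t < t := by
  unfold Di
  rcases hm : ((insert i D).filter (fun s => s < t)).max with _ | m
  · exact h
  · have hmem := Finset.mem_of_max hm
    simp only [Finset.mem_filter] at hmem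
    exact hmem.2

lemma Di_congr (i : ℤ) (D : Finset ℤ) (t t' : ℤ) (h : ∀ s ∈ insert i D, s < t)
    (h' : ∀ s ∈ insert i D, s < t') : Di i D t = Di i D t' := by
  unfold Di
  rw [Finset.filter_true_of_mem h, Finset.filter_true_of_mem h']

lemma Di_eq_max (i k : ℤ) (D : Finset ℤ) (t : ℤ) (hk : k ∈ D) (hmax : ∀ s ∈ D, s ≤ k)
    (hik : i ≤ k) (h : ∀ s ∈ insert i D, s < t) : Di i D t = k := by
  unfold Di
  rw [Finset.filter_true_of_mem h]
  have : (insert i D).max = (k : WithBot ℤ) := by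
    apply le_antisymm
    · apply Finset.max_le
      intro b hb
      rcases Finset.mem_insert.1 hb with rfl | hb
      · exact_mod_cast hik
      · exact_mod_cast hmax b hb
    · exact Finset.le_max (Finset.mem_insert_of_mem hk)
  rw [this]; rfl

lemma Di_empty (i t : ℤ) (h : i < t) : Di i (∅ : Finset ℤ) t = i := by
  unfold Di
  rw [show (insert i (∅ : Finset ℤ)) = {i} from rfl, Finset.filter_singleton, if_pos h,
    Finset.max_singleton]
  rfl

lemma Hfr_cancel (i a : ℤ) (A B : Finset ℤ) (ha : a ∈ A) (hb : a ∈ B) (hia : i < a) :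
    Hfr i A B = Hfr i (A.erase a) (B.erase a) := by
  unfold Hfr
  have hset : B \ A = (B.erase a) \ (A.erase a) := by
    ext t
    simp only [Finset.mem_sdiff, Finset.mem_erase]
    constructor
    · rintro ⟨h1, h2⟩; exact ⟨⟨fun hc => h2 (hc ▸ ha), h1⟩, fun hc => h2 hc.2⟩
    · rintro ⟨⟨h1, h2⟩, h3⟩; exact ⟨h2, fun hc => h3 ⟨h1, hc⟩⟩
  rw [← hset]
  refine Finset.sum_congr rfl fun D _ => ?_
  have hne : Xv a - Xv (Di i D a) ≠ 0 :=
    Xv_sub_ne_zero (Di_lt i D a hia).ne'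
  rw [← Finset.mul_prod_erase A _ ha, ← Finset.mul_prod_erase B _ hb,
    mul_div_assoc, mul_div_mul_left _ _ hne, ← mul_div_assoc]

lemma Hstep (i j k : ℤ) (A' B : Finset ℤ) (hij : i < j - 1) (hik : i ≤ k) (hkj : k < j - 1)
    (hkA' : k ∉ A') (hjA' : j - 1 ∉ A') (hfill : ∀ s, k < s → s < j - 1 → s ∈ A')
    (hB : B ⊆ Finset.Ioo i (j - 1)) :
    Hfr i (insert (j-1) A') B =
      Hfr i A' B * (Xv (j-1) - Xv k) + (if k = i then 0 else Hfr i (insert k A') B) := by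
  have hBmem : ∀ s ∈ B, i < s ∧ s < j - 1 := fun s hs => Finset.mem_Ioo.1 (hB hs)
  have hBA : B \ insert (j-1) A' = B \ A' := by
    ext t
    simp only [Finset.mem_sdiff, Finset.mem_insert, not_or]
    constructor
    · rintro ⟨h1, _, h2⟩; exact ⟨h1, h2⟩
    · rintro ⟨h1, h2⟩; exact ⟨h1, (hBmem t h1).2.ne, h2⟩
  have hDbound : ∀ D : Finset ℤ, D ⊆ B \ A' → ∀ s ∈ D, i < s ∧ s ≤ k ∧ s < j - 1 := by
    intro D hD s hs
    have hsB := Finset.mem_sdiff.1 (hD hs)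
    refine ⟨(hBmem s hsB.1).1, ?_, (hBmem s hsB.1).2⟩
    by_contra hc
    exact hsB.2 (hfill s (lt_of_not_ge hc) (hBmem s hsB.1).2)
  have e1 : Hfr i (insert (j-1) A') B
      = (∑ D ∈ (B \ A').powerset, (-1:MyFF)^D.card *
          (∏ t ∈ A', (Xv t - Xv (Di i D t))) / ∏ t ∈ B, (Xv t - Xv (Di i D t)))
          * (Xv (j-1) - Xv k)
        + ∑ D ∈ (B \ A').powerset, (-1:MyFF)^D.card *
          ((Xv k - Xv (Di i D (j-1))) * ∏ t ∈ A', (Xv t - Xv (Di i D t)))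
            / ∏ t ∈ B, (Xv t - Xv (Di i D t)) := by
    unfold Hfr
    rw [hBA, Finset.sum_mul, ← Finset.sum_add_distrib]
    refine Finset.sum_congr rfl fun D hD => ?_
    rw [Finset.prod_insert hjA',
      show Xv (j-1) - Xv (Di i D (j-1))
        = (Xv (j-1) - Xv k) + (Xv k - Xv (Di i D (j-1))) by ring]
    ring
  rw [e1, ← Hfr]
  congr 1
  -- now: S2 = if-term
  by_cases hk : k = i
  · rw [if_pos hk]
    subst hk
    have hempty : B \ A' = ∅ := by
      rw [Finset.sdiff_eq_empty_iff_subset]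
      intro t ht
      exact hfill t (hBmem t ht).1 (hBmem t ht).2
    rw [hempty, Finset.powerset_empty, Finset.sum_singleton, Di_empty _ _ hij,
      sub_self, zero_mul, mul_zero, zero_div]
  · rw [if_neg hk]
    have hik' : i < k := lt_of_le_of_ne hik (Ne.symm hk)
    by_cases hkB : k ∈ B
    · -- k ∈ B
      have hkBA : k ∈ B \ A' := Finset.mem_sdiff.2 ⟨hkB, hkA'⟩
      have hsplit := (Finset.insert_erase hkBA).symm
      rw [hsplit, Finset.sum_powerset_insert (Finset.notMem_erase k _)]
      have hz : ∀ D ∈ ((B \ A').erase k).powerset, (-1:MyFF)^(insert k D).card *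
          ((Xv k - Xv (Di i (insert k D) (j-1))) * ∏ t ∈ A', (Xv t - Xv (Di i (insert k D) t)))
            / ∏ t ∈ B, (Xv t - Xv (Di i (insert k D) t)) = 0 := by
        intro D hD
        have hD' : D ⊆ B \ A' := (Finset.mem_powerset.1 hD).trans (Finset.erase_subset _ _)
        have : Di i (insert k D) (j-1) = k := by
          apply Di_eq_max i k _ _ (Finset.mem_insert_self k D)
          · intro s hs
            rcases Finset.mem_insert.1 hs with rfl | hs
            · exact le_refl s
            · exact (hDbound D hD' s hs).2.1
          · exact hik
          · intro s hs
            rcases Finset.mem_insert.1 hs with rfl | hs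
            · exact hij
            · rcases Finset.mem_insert.1 hs with rfl | hs
              · exact hkj
              · exact (hDbound D hD' s hs).2.2
        rw [this, sub_self, zero_mul, mul_zero, zero_div]
      rw [Finset.sum_congr rfl hz, Finset.sum_const_zero, add_zero]
      have hcancel : Hfr i (insert k A') B = Hfr i A' (B.erase k) := by
        rw [Hfr_cancel i k _ _ (Finset.mem_insert_self k A') hkB hik',
          Finset.erase_insert hkA']
      rw [hcancel]
      unfold Hfr
      have hidx : B.erase k \ A' = (B \ A').erase k := by
        ext t
        simp only [Finset.mem_sdiff, Finset.mem_erase]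
        tauto
      rw [hidx]
      refine (Finset.sum_congr rfl fun D hD => ?_).symm
      have hD' : D ⊆ B \ A' := (Finset.mem_powerset.1 hD).trans (Finset.erase_subset _ _)
      have hDk : ∀ s ∈ D, s < k := by
        intro s hs
        have hne : s ≠ k := Finset.ne_of_mem_erase ((Finset.mem_powerset.1 hD) hs)
        exact lt_of_le_of_ne (hDbound D hD' s hs).2.1 hne
      have hDi : Di i D (j-1) = Di i D k := by
        apply Di_congr
        · intro s hs
          rcases Finset.mem_insert.1 hs with rfl | hs
          · exact hij
          · exact (hDbound D hD' s hs).2.2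
        · intro s hs
          rcases Finset.mem_insert.1 hs with rfl | hs
          · exact hik'
          · exact hDk s hs
      have hne : Xv k - Xv (Di i D k) ≠ 0 := Xv_sub_ne_zero (Di_lt i D k hik').ne'
      rw [hDi, ← Finset.mul_prod_erase B _ hkB]
      conv_rhs => rw [mul_div_assoc, mul_div_mul_left _ _ hne]
      rw [mul_div_assoc]
    · -- k ∉ B
      unfold Hfr
      have hidx : B \ insert k A' = B \ A' := by
        ext t
        simp only [Finset.mem_sdiff, Finset.mem_insert, not_or]
        constructor
        · rintro ⟨h1, _, h2⟩; exact ⟨h1, h2⟩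
        · rintro ⟨h1, h2⟩; exact ⟨h1, fun hc => hkB (hc ▸ h1), h2⟩
      rw [hidx]
      refine Finset.sum_congr rfl fun D hD => ?_
      have hD' : D ⊆ B \ A' := Finset.mem_powerset.1 hD
      have hDk : ∀ s ∈ D, s < k := by
        intro s hs
        have hne : s ≠ k := fun hc => hkB (hc ▸ (Finset.mem_sdiff.1 (hD' hs)).1)
        exact lt_of_le_of_ne (hDbound D hD' s hs).2.1 hne
      have hDi : Di i D (j-1) = Di i D k := by
        apply Di_congr
        · intro s hs
          rcases Finset.mem_insert.1 hs with rfl | hs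
          · exact hij
          · exact (hDbound D hD' s hs).2.2
        · intro s hs
          rcases Finset.mem_insert.1 hs with rfl | hs
          · exact hik'
          · exact hDk s hs
      rw [Finset.prod_insert hkA', hDi]

/-- Lemma 4(ii): if `j-1 ∈ A` and `k = max ([i..j) \ A)`, then
`K_{i,j}(A) = K_{i,j-1}(A\{j-1})·(y_j - x_k) + δ_{k≠i}·K_{i,j-1}({k} ∪ A\{j-1})`. -/
theorem stmt1 (i j : ℤ) (A : Finset ℤ) (hij : i < j - 1)
    (hA : A ⊆ Finset.Ioo i j) (hj : j - 1 ∈ A) :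
    Kfr i j A =
      Kfr i (j - 1) (A.erase (j - 1)) * (Yv j - Xv (((Finset.Ico i j \ A).max).unbotD i)) +
      (if ((Finset.Ico i j \ A).max).unbotD i ≠ i then 1 else 0) *
        Kfr i (j - 1) (insert (((Finset.Ico i j \ A).max).unbotD i) (A.erase (j - 1))) := by
  set k := ((Finset.Ico i j \ A).max).unbotD i with hkdef
  set A' := A.erase (j - 1) with hA'def
  have hiA : i ∉ A := fun h => by have := Finset.mem_Ioo.1 (hA h); omega
  have hi_mem : i ∈ Finset.Ico i j \ A := by
    rw [Finset.mem_sdiff, Finset.mem_Ico]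
    exact ⟨⟨le_refl i, by omega⟩, hiA⟩
  obtain ⟨m, hm⟩ := Finset.max_of_nonempty ⟨i, hi_mem⟩
  have hkm : k = m := by rw [hkdef, hm]; rfl
  have hkmem : k ∈ Finset.Ico i j \ A := hkm ▸ Finset.mem_of_max hm
  have hkmax : ∀ s ∈ Finset.Ico i j \ A, s ≤ k := fun s hs =>
    hkm ▸ Finset.le_max_of_eq hs hm
  have hk3 : k ∉ A := (Finset.mem_sdiff.1 hkmem).2
  have hk12 : i ≤ k ∧ k < j := Finset.mem_Ico.1 (Finset.mem_sdiff.1 hkmem).1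
  have hk1 : i ≤ k := hk12.1
  have hknej : k ≠ j - 1 := fun h => hk3 (h ▸ hj)
  have hk4 : k < j - 1 := by omega
  have hfill : ∀ s, k < s → s < j → s ∈ A := by
    intro s h1 h2
    by_contra hc
    have : s ∈ Finset.Ico i j \ A := by
      rw [Finset.mem_sdiff, Finset.mem_Ico]
      exact ⟨⟨by omega, h2⟩, hc⟩
    have := hkmax s this
    omega
  have hAins : A = insert (j-1) A' := (Finset.insert_erase hj).symm
  have hjA' : j - 1 ∉ A' := Finset.notMem_erase _ _
  have hkA' : k ∉ A' := fun h => hk3 (Finset.mem_of_mem_erase h)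
  have hfill' : ∀ s, k < s → s < j - 1 → s ∈ A' := fun s h1 h2 =>
    Finset.mem_erase.2 ⟨by omega, hfill s h1 (by omega)⟩
  have hIoo : Finset.Ioo i j = insert (j-1) (Finset.Ioo i (j-1)) := by
    ext t
    simp only [Finset.mem_Ioo, Finset.mem_insert]
    omega
  have hjnot : j - 1 ∉ Finset.Ioo i (j-1) := by simp
  have e1 : ∀ B ∈ (Finset.Ioo i (j-1)).powerset,
      Hfr i A B = Hfr i A' B * (Xv (j-1) - Xv k) +
        (if k = i then 0 else Hfr i (insert k A') B) := by
    intro B hB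
    rw [hAins]
    exact Hstep i j k A' B hij hk1 hk4 hkA' hjA' hfill' (Finset.mem_powerset.1 hB)
  have e2 : ∀ B ∈ (Finset.Ioo i (j-1)).powerset,
      Hfr i A (insert (j-1) B) * ∏ t ∈ insert i (insert (j-1) B), (Yv (t+1) - Xv t)
        = Hfr i A' B * ((Yv j - Xv (j-1)) * ∏ t ∈ insert i B, (Yv (t+1) - Xv t)) := by
    intro B hB
    have hBsub := Finset.mem_powerset.1 hB
    have hjB : j - 1 ∉ B := fun h => by have := Finset.mem_Ioo.1 (hBsub h); omega
    have h1 : Hfr i A (insert (j-1) B) = Hfr i A' B := by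
      rw [Hfr_cancel i (j-1) A _ hj (Finset.mem_insert_self _ _) hij,
        Finset.erase_insert hjB]
    have h2 : insert i (insert (j-1) B) = insert (j-1) (insert i B) :=
      Finset.insert_comm _ _ _
    have hjiB : j - 1 ∉ insert i B := by
      simp only [Finset.mem_insert, not_or]
      exact ⟨by omega, hjB⟩
    rw [h1, h2, Finset.prod_insert hjiB, show j - 1 + 1 = j by ring]
  have key : ∀ B ∈ (Finset.Ioo i (j-1)).powerset,
      Hfr i A B * ∏ t ∈ insert i B, (Yv (t+1) - Xv t) +
        Hfr i A (insert (j-1) B) * ∏ t ∈ insert i (insert (j-1) B), (Yv (t+1) - Xv t)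
      = (Hfr i A' B * ∏ t ∈ insert i B, (Yv (t+1) - Xv t)) * (Yv j - Xv k) +
        (if k ≠ i then 1 else 0) *
          (Hfr i (insert k A') B * ∏ t ∈ insert i B, (Yv (t+1) - Xv t)) := by
    intro B hB
    rw [e2 B hB, e1 B hB]
    rcases eq_or_ne k i with h | h
    · rw [if_pos h, if_neg (not_not_intro h)]
      ring
    · rw [if_neg h, if_pos h]
      ring
  simp only [Kfr]
  rw [hIoo, Finset.sum_powerset_insert hjnot, ← Finset.sum_add_distrib,
    Finset.sum_congr rfl key, Finset.sum_add_distrib, ← Finset.sum_mul,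
    ← Finset.mul_sum]


end
end

section
/- Let p be prime, μ, λ integer sequences, 1 ≤ i < j-1 < n-1. Suppose j-1 ∈ 𝔅^μ(i,j), j-1 ∉ 𝔅^{μ,λ}(i,j), and there exist a weakly decreasing injection ε : 𝔅^{μ,λ}(i,j-1) → ℭ^μ(i,j-1) and a weakly increasing injection τ : 𝔅^{μ,λ}(i,j-1) → 𝔅^μ(i,j-1). Define, for x ∈ {i} ∪ Im ε and 1 ≤ k ≤ j-1: θ_k(i) := j-1; θ_k(x) := ε^{-1}(x) if x > i and ε^{-1}(x) < k; θ_k(x) := τ(ε^{-1}(x)) if x > i and ε^{-1}(x) ≥ k. Then each θ_k is a weakly increasing injection from {i} ∪ Im ε into 𝔅^{μ,λ,k}(i,j). -/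
open Finset

/-- `B^{μ,λ,k}(i,t) ∈ ℤ/pℤ`: the class of `t - i + μ_i - μ_{t+1}` if `k ≤ t`
and of `t - i + μ_i - λ_{t+1}` if `k > t`. -/
def Bres (p : ℕ) (μ lam : ℤ → ℤ) (k i t : ℤ) : ZMod p :=
  if k ≤ t then ((t - i + μ i - μ (t + 1) : ℤ) : ZMod p)
  else ((t - i + μ i - lam (t + 1) : ℤ) : ZMod p)

/-- `𝔅^{μ,λ,k}(i,j) = {a : i ≤ a < j, B^{μ,λ,k}(i,a) = 0}`. -/
noncomputable def BSet (p : ℕ) (μ lam : ℤ → ℤ) (k i j : ℤ) : Finset ℤ :=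
  (Finset.Ico i j).filter fun a => Bres p μ lam k i a = 0

/-- `ℭ^μ(i,j) = {a : i < a < j, a - i + μ_i - μ_a ≡ 0 (mod p)}`. -/
noncomputable def CSet (p : ℕ) (μ : ℤ → ℤ) (i j : ℤ) : Finset ℤ :=
  (Finset.Ioo i j).filter fun a => ((a - i + μ i - μ a : ℤ) : ZMod p) = 0

/-- Construction of the maps `θ_k` in the proof of Theorem 5(iii): given
`j-1 ∈ 𝔅^μ(i,j)`, `j-1 ∉ 𝔅^{μ,λ}(i,j)`, a weakly decreasing injection
`ε : 𝔅^{μ,λ}(i,j-1) → ℭ^μ(i,j-1)` and a weakly increasing injection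
`τ : 𝔅^{μ,λ}(i,j-1) → 𝔅^μ(i,j-1)`, any map `θ` with `θ(i) = j-1` and
`θ(ε(b)) = b` if `b < k`, `θ(ε(b)) = τ(b)` if `b ≥ k`, is a weakly increasing
injection from `{i} ∪ Im ε` into `𝔅^{μ,λ,k}(i,j)`. -/
theorem stmt9 (p : ℕ) (hp : p.Prime) (n : ℤ) (hn : 1 < n) (μ lam : ℤ → ℤ)
    (i j : ℤ) (hi : 1 ≤ i) (hij : i < j - 1) (hjn : j - 1 < n - 1)
    (hmem : j - 1 ∈ BSet p μ μ n i j) (hnmem : j - 1 ∉ BSet p μ lam n i j)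
    (ε τ : ℤ → ℤ)
    (hεinj : Set.InjOn ε ((BSet p μ lam n i (j - 1) : Finset ℤ) : Set ℤ))
    (hε : ∀ b ∈ BSet p μ lam n i (j - 1), ε b ≤ b ∧ ε b ∈ CSet p μ i (j - 1))
    (hτinj : Set.InjOn τ ((BSet p μ lam n i (j - 1) : Finset ℤ) : Set ℤ))
    (hτ : ∀ b ∈ BSet p μ lam n i (j - 1), b ≤ τ b ∧ τ b ∈ BSet p μ μ n i (j - 1)) :
    ∀ k : ℤ, 1 ≤ k → k ≤ j - 1 →
      ∀ θ : ℤ → ℤ, θ i = j - 1 →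
        (∀ b ∈ BSet p μ lam n i (j - 1), θ (ε b) = if b < k then b else τ b) →
        Set.InjOn θ ((insert i ((BSet p μ lam n i (j - 1)).image ε) : Finset ℤ) : Set ℤ) ∧
        ∀ x ∈ insert i ((BSet p μ lam n i (j - 1)).image ε),
          x ≤ θ x ∧ θ x ∈ BSet p μ lam k i j := by
  intro k hk1 hkj θ hθi hθε
  -- basic facts about elements of B
  have hB : ∀ b ∈ BSet p μ lam n i (j - 1),
      i ≤ b ∧ b < j - 1 ∧ ((b - i + μ i - lam (b + 1) : ℤ) : ZMod p) = 0 := by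
    intro b hb
    simp only [BSet, mem_filter, mem_Ico] at hb
    simp only [Bres] at hb
    obtain ⟨⟨h1, h2⟩, h3⟩ := hb
    rw [if_neg (by omega)] at h3
    exact ⟨h1, h2, h3⟩
  have hτB : ∀ b ∈ BSet p μ lam n i (j - 1),
      i ≤ τ b ∧ τ b < j - 1 ∧ ((τ b - i + μ i - μ (τ b + 1) : ℤ) : ZMod p) = 0 := by
    intro b hb
    have := (hτ b hb).2
    simp only [BSet, mem_filter, mem_Ico] at this
    simp only [Bres] at this
    obtain ⟨⟨h1, h2⟩, h3⟩ := this
    rw [if_neg (by omega)] at h3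
    exact ⟨h1, h2, h3⟩
  have hεlt : ∀ b ∈ BSet p μ lam n i (j - 1), i < ε b ∧ ε b < j - 1 := by
    intro b hb
    have := (hε b hb).2
    simp only [CSet, mem_filter, mem_Ioo] at this
    exact this.1
  -- value bound for θ on the image of ε
  have hθlt : ∀ b ∈ BSet p μ lam n i (j - 1), θ (ε b) < j - 1 := by
    intro b hb
    rw [hθε b hb]
    split
    · exact (hB b hb).2.1
    · exact (hτB b hb).2.1
  -- membership of θ values in the target set
  have hθmem : ∀ b ∈ BSet p μ lam n i (j - 1), θ (ε b) ∈ BSet p μ lam k i j := by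
    intro b hb
    by_cases h : b < k
    · rw [hθε b hb, if_pos h]
      simp only [BSet, mem_filter, mem_Ico]
      simp only [Bres]
      rw [if_neg (by omega)]
      exact ⟨⟨(hB b hb).1, by have := (hB b hb).2.1; omega⟩, (hB b hb).2.2⟩
    · rw [hθε b hb, if_neg h]
      simp only [BSet, mem_filter, mem_Ico]
      simp only [Bres]
      rw [if_pos (by have := (hτ b hb).1; omega)]
      exact ⟨⟨(hτB b hb).1, by have := (hτB b hb).2.1; omega⟩, (hτB b hb).2.2⟩
  have hθimem : θ i ∈ BSet p μ lam k i j := by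
    simp only [BSet, mem_filter, mem_Ico] at hmem ⊢
    simp only [Bres] at hmem ⊢
    rw [if_neg (by omega)] at hmem
    rw [hθi, if_pos hkj]
    exact ⟨⟨by omega, by omega⟩, hmem.2⟩
  constructor
  · intro x hx y hy hxy
    simp only [coe_insert, Set.mem_insert_iff, coe_image, Set.mem_image,
      Finset.mem_coe] at hx hy
    rcases hx with rfl | ⟨b, hb, rfl⟩
    · rcases hy with rfl | ⟨b', hb', rfl⟩
      · rfl
      · exfalso; have := hθlt b' hb'; rw [← hxy, hθi] at this; omega
    · rcases hy with rfl | ⟨b', hb', rfl⟩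
      · exfalso; have := hθlt b hb; rw [hxy, hθi] at this; omega
      · rw [hθε b hb, hθε b' hb'] at hxy
        have hbB : i ≤ b ∧ b < j - 1 := ⟨(hB b hb).1, (hB b hb).2.1⟩
        have hbB' : i ≤ b' ∧ b' < j - 1 := ⟨(hB b' hb').1, (hB b' hb').2.1⟩
        have hτb := (hτ b hb).1
        have hτb' := (hτ b' hb').1
        split_ifs at hxy with h h' h'
        · rw [hxy]
        · omega
        · omega
        · rw [hτinj (by exact_mod_cast hb) (by exact_mod_cast hb') hxy]
  · intro x hx
    simp only [Finset.mem_insert, Finset.mem_image] at hx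
    rcases hx with rfl | ⟨b, hb, rfl⟩
    · exact ⟨by rw [hθi]; omega, hθimem⟩
    · refine ⟨?_, hθmem b hb⟩
      rw [hθε b hb]
      have hεb := (hε b hb).1
      have hτb := (hτ b hb).1
      split <;> omega
end
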